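/- Let α₁ > 0, α₂ ∈ ℝ, c > 0, σ₁ < 0, σ₂ ∈ ℝ, and define A, C₊ and the 4×4 complex matrix family M₊(s) as in the context. Suppose λ : ℂ → ℂ and v : ℂ → ℂ⁴ are differentiable at 0, λ(0) = 0, v(0) = v₀ := (0,1,0,0)ᵀ, and M₊(s) v(s) = λ(s) v(s) for all s in a neighborhood of 0 in ℂ. Then λ'(0) = 1/c. -/

import Mathlib

open Matrix

/-- The matrix family `M₊(s) = [[0, I₂],[A⁻¹(sI₂ − C₊), −cA⁻¹]]` with
`A = [[α₁, −α₂],[α₂, α₁]]` and `C₊ = [[σ₁, 0],[σ₂, 0]]`, regarded as a complex `4×4`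
matrix indexed by `Fin 2 ⊕ Fin 2`. -/
noncomputable def Mplus (α₁ α₂ c σ₁ σ₂ : ℝ) (s : ℂ) :
    Matrix (Fin 2 ⊕ Fin 2) (Fin 2 ⊕ Fin 2) ℂ :=
  Matrix.fromBlocks 0 1
    ((!![(α₁ : ℂ), -(α₂ : ℂ); (α₂ : ℂ), (α₁ : ℂ)])⁻¹ *
      (s • (1 : Matrix (Fin 2) (Fin 2) ℂ) - !![(σ₁ : ℂ), 0; (σ₂ : ℂ), 0]))
    (-((c : ℂ) • (!![(α₁ : ℂ), -(α₂ : ℂ); (α₂ : ℂ), (α₁ : ℂ)])⁻¹))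

set_option maxHeartbeats 1000000 in
/-- Lemma 3.3: the branch `λ(s)` of the eigenvalue of `M₊(s)` through `0` with
eigenvector branch `v(s)` through `v₀ = (0,1,0,0)ᵀ` satisfies `λ'(0) = 1/c`. -/
theorem stmt_12 (α₁ α₂ c σ₁ σ₂ : ℝ) (hα₁ : 0 < α₁) (hc : 0 < c) (hσ₁ : σ₁ < 0)
    (lam : ℂ → ℂ) (v : ℂ → (Fin 2 ⊕ Fin 2 → ℂ))
    (hlam : DifferentiableAt ℂ lam 0) (hv : DifferentiableAt ℂ v 0)
    (hlam0 : lam 0 = 0)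
    (hv0 : v 0 = Sum.elim ![0, 1] ![0, 0])
    (heig : ∀ᶠ s in nhds (0 : ℂ),
      (Mplus α₁ α₂ c σ₁ σ₂ s).mulVec (v s) = lam s • v s) :
    deriv lam 0 = 1 / (c : ℂ) := by
  have hdR : (0:ℝ) < α₁^2 + α₂^2 := by positivity
  have hd : ((α₁:ℂ)^2 + (α₂:ℂ)^2) ≠ 0 := by
    have : ((α₁^2 + α₂^2 : ℝ):ℂ) ≠ 0 := Complex.ofReal_ne_zero.mpr (ne_of_gt hdR)
    simpa using this
  have hAinv : (!![(α₁:ℂ), -(α₂:ℂ); (α₂:ℂ), (α₁:ℂ)])⁻¹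
      = !![(α₁:ℂ)/((α₁:ℂ)^2+(α₂:ℂ)^2), (α₂:ℂ)/((α₁:ℂ)^2+(α₂:ℂ)^2);
           -(α₂:ℂ)/((α₁:ℂ)^2+(α₂:ℂ)^2), (α₁:ℂ)/((α₁:ℂ)^2+(α₂:ℂ)^2)] := by
    apply inv_eq_right_inv
    ext i j
    fin_cases i <;> fin_cases j <;>
      simp [Matrix.mul_apply, Fin.sum_univ_two] <;> field_simp <;> ring
  have hM : ∀ s : ℂ, Mplus α₁ α₂ c σ₁ σ₂ s = Matrix.fromBlocks 0 1
      !![((α₁:ℂ)*(s-σ₁) - α₂*σ₂)/((α₁:ℂ)^2+(α₂:ℂ)^2), (α₂:ℂ)*s/((α₁:ℂ)^2+(α₂:ℂ)^2);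
         (-(α₂:ℂ)*(s-σ₁) - α₁*σ₂)/((α₁:ℂ)^2+(α₂:ℂ)^2), (α₁:ℂ)*s/((α₁:ℂ)^2+(α₂:ℂ)^2)]
      !![-(c:ℂ)*α₁/((α₁:ℂ)^2+(α₂:ℂ)^2), -(c:ℂ)*α₂/((α₁:ℂ)^2+(α₂:ℂ)^2);
         (c:ℂ)*α₂/((α₁:ℂ)^2+(α₂:ℂ)^2), -(c:ℂ)*α₁/((α₁:ℂ)^2+(α₂:ℂ)^2)] := by
    intro s
    have h1s : s • (1 : Matrix (Fin 2) (Fin 2) ℂ) - !![(σ₁:ℂ), 0; (σ₂:ℂ), 0]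
        = !![s - σ₁, 0; -(σ₂:ℂ), s] := by
      ext i j
      fin_cases i <;> fin_cases j <;> simp [Matrix.one_apply]
    rw [Mplus, hAinv, h1s]
    ext i j
    rcases i with i | i <;> rcases j with j | j <;> fin_cases i <;> fin_cases j <;>
      simp [Matrix.mul_apply, Fin.sum_univ_two] <;> field_simp <;> ring
  -- component equations
  have hE1 : ∀ᶠ s in nhds (0:ℂ), v s (Sum.inr 0) = lam s * v s (Sum.inl 0) := by
    filter_upwards [heig] with s hs
    have h := congrFun hs (Sum.inl 0)
    rw [hM] at h
    simpa [Matrix.mulVec, dotProduct, Fintype.sum_sum_type,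
      Fin.sum_univ_two, Matrix.one_apply] using h
  have hE2 : ∀ᶠ s in nhds (0:ℂ), v s (Sum.inr 1) = lam s * v s (Sum.inl 1) := by
    filter_upwards [heig] with s hs
    have h := congrFun hs (Sum.inl 1)
    rw [hM] at h
    simpa [Matrix.mulVec, dotProduct, Fintype.sum_sum_type,
      Fin.sum_univ_two, Matrix.one_apply] using h
  have hE3 : ∀ᶠ s in nhds (0:ℂ),
      (s - σ₁) * v s (Sum.inl 0) - c * v s (Sum.inr 0)
        = lam s * (α₁ * v s (Sum.inr 0) - α₂ * v s (Sum.inr 1)) := by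
    filter_upwards [heig] with s hs
    have h0 := congrFun hs (Sum.inr 0)
    have h1 := congrFun hs (Sum.inr 1)
    rw [hM] at h0 h1
    simp [Matrix.mulVec, dotProduct, Fintype.sum_sum_type,
      Fin.sum_univ_two] at h0 h1
    field_simp at h0 h1
    have key : ((α₁:ℂ)^2+(α₂:ℂ)^2)^3 * ((s - σ₁) * v s (Sum.inl 0) - c * v s (Sum.inr 0)
        - lam s * (α₁ * v s (Sum.inr 0) - α₂ * v s (Sum.inr 1))) = 0 := by
      linear_combination ((α₁:ℂ)^2+(α₂:ℂ)^2)^2 * ((α₁:ℂ) * h0 - (α₂:ℂ) * h1)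
    have := (mul_eq_zero.mp key).resolve_left (pow_ne_zero _ hd)
    linear_combination this
  have hE4 : ∀ᶠ s in nhds (0:ℂ),
      -(σ₂:ℂ) * v s (Sum.inl 0) + s * v s (Sum.inl 1) - c * v s (Sum.inr 1)
        = lam s * (α₂ * v s (Sum.inr 0) + α₁ * v s (Sum.inr 1)) := by
    filter_upwards [heig] with s hs
    have h0 := congrFun hs (Sum.inr 0)
    have h1 := congrFun hs (Sum.inr 1)
    rw [hM] at h0 h1
    simp [Matrix.mulVec, dotProduct, Fintype.sum_sum_type,
      Fin.sum_univ_two] at h0 h1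
    field_simp at h0 h1
    have key : ((α₁:ℂ)^2+(α₂:ℂ)^2)^3 * (-(σ₂:ℂ) * v s (Sum.inl 0) + s * v s (Sum.inl 1) - c * v s (Sum.inr 1)
        - lam s * (α₂ * v s (Sum.inr 0) + α₁ * v s (Sum.inr 1))) = 0 := by
      linear_combination ((α₁:ℂ)^2+(α₂:ℂ)^2)^2 * ((α₂:ℂ) * h0 + (α₁:ℂ) * h1)
    have := (mul_eq_zero.mp key).resolve_left (pow_ne_zero _ hd)
    linear_combination this
  -- calculus
  have hvD := hv.hasDerivAt
  set w := deriv v 0 with hw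
  have hvi : ∀ i, HasDerivAt (fun s => v s i) (w i) 0 := fun i =>
    hasDerivAt_pi.mp hvD i
  have hlD : HasDerivAt lam (deriv lam 0) 0 := hlam.hasDerivAt
  set L := deriv lam 0 with hL
  have hv00 : v 0 (Sum.inl 0) = 0 := by rw [hv0]; rfl
  have hv01 : v 0 (Sum.inl 1) = 1 := by rw [hv0]; rfl
  have hv10 : v 0 (Sum.inr 0) = 0 := by rw [hv0]; rfl
  have hv11 : v 0 (Sum.inr 1) = 0 := by rw [hv0]; rfl
  -- w (inr 0) = 0
  have h10 : w (Sum.inr 0) = 0 := by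
    have hg : HasDerivAt (fun s => lam s * v s (Sum.inl 0))
        (L * v 0 (Sum.inl 0) + lam 0 * w (Sum.inl 0)) 0 := hlD.mul (hvi _)
    have hf := hg.congr_of_eventuallyEq hE1
    have := (hvi (Sum.inr 0)).unique hf
    rw [this, hv00, hlam0]; ring
  -- w (inr 1) = L
  have h11 : w (Sum.inr 1) = L := by
    have hg : HasDerivAt (fun s => lam s * v s (Sum.inl 1))
        (L * v 0 (Sum.inl 1) + lam 0 * w (Sum.inl 1)) 0 := hlD.mul (hvi _)
    have hf := hg.congr_of_eventuallyEq hE2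
    have := (hvi (Sum.inr 1)).unique hf
    rw [this, hv01, hlam0]; ring
  -- w (inl 0) = 0 from E3
  have h00 : w (Sum.inl 0) = 0 := by
    have hf : HasDerivAt
        (fun s => (s - σ₁) * v s (Sum.inl 0) - c * v s (Sum.inr 0))
        ((1 * v 0 (Sum.inl 0) + ((0:ℂ) - σ₁) * w (Sum.inl 0)) - c * w (Sum.inr 0)) 0 :=
      (((hasDerivAt_id (0:ℂ)).sub_const (σ₁:ℂ)).mul (hvi _)).sub ((hvi _).const_mul _)
    have hg : HasDerivAt
        (fun s => lam s * (α₁ * v s (Sum.inr 0) - α₂ * v s (Sum.inr 1)))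
        (L * (α₁ * v 0 (Sum.inr 0) - α₂ * v 0 (Sum.inr 1))
          + lam 0 * (α₁ * w (Sum.inr 0) - α₂ * w (Sum.inr 1))) 0 :=
      hlD.mul (((hvi _).const_mul _).sub ((hvi _).const_mul _))
    have hf' := hg.congr_of_eventuallyEq hE3
    have hEq := hf.unique hf'
    rw [hv00, hv10, hv11, hlam0, h10] at hEq
    have hσ : (σ₁:ℂ) ≠ 0 := by
      exact_mod_cast Complex.ofReal_ne_zero.mpr (ne_of_lt hσ₁)
    have : -(σ₁:ℂ) * w (Sum.inl 0) = 0 := by linear_combination hEq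
    rcases mul_eq_zero.mp this with h | h
    · exact absurd (neg_eq_zero.mp h) hσ
    · exact h
  -- main equation from E4
  have hf : HasDerivAt
      (fun s => -(σ₂:ℂ) * v s (Sum.inl 0) + s * v s (Sum.inl 1) - c * v s (Sum.inr 1))
      ((-(σ₂:ℂ) * w (Sum.inl 0) + (1 * v 0 (Sum.inl 1) + (0:ℂ) * w (Sum.inl 1)))
        - c * w (Sum.inr 1)) 0 :=
    (((hvi _).const_mul _).add ((hasDerivAt_id (0:ℂ)).mul (hvi _))).sub
      ((hvi _).const_mul _)
  have hg : HasDerivAt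
      (fun s => lam s * (α₂ * v s (Sum.inr 0) + α₁ * v s (Sum.inr 1)))
      (L * (α₂ * v 0 (Sum.inr 0) + α₁ * v 0 (Sum.inr 1))
        + lam 0 * (α₂ * w (Sum.inr 0) + α₁ * w (Sum.inr 1))) 0 :=
    hlD.mul (((hvi _).const_mul _).add ((hvi _).const_mul _))
  have hf' := hg.congr_of_eventuallyEq hE4
  have hEq := hf.unique hf'
  rw [hv01, hv10, hv11, hlam0, h00, h11] at hEq
  have hcne : (c:ℂ) ≠ 0 := Complex.ofReal_ne_zero.mpr (ne_of_gt hc)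
  field_simp
  linear_combination -hEq
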